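/- arXiv:2402.12872 — 2 statements merged into one kernel-verified Lean document; each statement's English description precedes it below -/
import Mathlib

section
/- Let D ∈ ℝ^{m×n}, K ∈ ℝ^{p×n} with N(K) ∩ N(D) = {0}, μ, β > 0, M = DᵀD + (μ/β)KᵀK, and G = D M⁻¹ Dᵀ. Then G is symmetric positive semi-definite and its spectral radius satisfies ρ(G) ≤ 1. -/
open Matrix

noncomputable def specRad {n : ℕ} (A : Matrix (Fin n) (Fin n) ℝ) : ℝ :=
  sSup (abs '' spectrum ℝ A)

lemma dp_self_nonneg {n : ℕ} (v : Fin n → ℝ) : 0 ≤ v ⬝ᵥ v :=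
  Finset.sum_nonneg fun i _ => mul_self_nonneg _

theorem G_symm_psd_specRad_le_one {m n p : ℕ}
    (D : Matrix (Fin m) (Fin n) ℝ) (K : Matrix (Fin p) (Fin n) ℝ)
    (μ β : ℝ) (hμ : 0 < μ) (hβ : 0 < β)
    (hnull : ∀ x : Fin n → ℝ, K.mulVec x = 0 → D.mulVec x = 0 → x = 0) :
    let M := Dᵀ * D + (μ / β) • (Kᵀ * K)
    let G := D * M⁻¹ * Dᵀ
    G.IsSymm ∧ G.PosSemidef ∧ specRad G ≤ 1 := by
  intro M G
  have hc : 0 < μ / β := div_pos hμ hβ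
  have key : ∀ x : Fin n → ℝ,
      x ⬝ᵥ M *ᵥ x = (D *ᵥ x) ⬝ᵥ (D *ᵥ x) + (μ / β) * ((K *ᵥ x) ⬝ᵥ (K *ᵥ x)) := by
    intro x
    show x ⬝ᵥ (Dᵀ * D + (μ / β) • (Kᵀ * K)) *ᵥ x = _
    rw [add_mulVec, dotProduct_add, smul_mulVec, dotProduct_smul, smul_eq_mul,
      ← mulVec_mulVec, ← mulVec_mulVec, dotProduct_mulVec x Dᵀ, vecMul_transpose,
      dotProduct_mulVec x Kᵀ, vecMul_transpose]
  have hMpd : M.PosDef := by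
    refine Matrix.PosDef.of_dotProduct_mulVec_pos ?_ fun x hx => ?_
    · show Mᴴ = M
      show (Dᵀ * D + (μ / β) • (Kᵀ * K))ᴴ = _
      rw [conjTranspose_add, conjTranspose_smul,
        show (Dᵀ * D)ᴴ = (Dᵀ * D)ᵀ from rfl, transpose_mul, transpose_transpose,
        show (Kᵀ * K)ᴴ = (Kᵀ * K)ᵀ from rfl, transpose_mul, transpose_transpose]
      norm_num
      rfl
    · show (0 : ℝ) < star x ⬝ᵥ M *ᵥ x
      rw [show star x = x from rfl, key x]
      have h1 := dp_self_nonneg (D *ᵥ x)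
      have h2 := dp_self_nonneg (K *ᵥ x)
      rcases h1.lt_or_eq with h | h
      · nlinarith
      rcases h2.lt_or_eq with h' | h'
      · nlinarith
      · exact absurd (hnull x (dotProduct_self_eq_zero.mp h'.symm)
          (dotProduct_self_eq_zero.mp h.symm)) hx
  have hMinv : (M⁻¹).PosDef := hMpd.inv
  have hG : G.PosSemidef := hMinv.posSemidef.mul_mul_conjTranspose_same D
  have hbound : ∀ y : Fin m → ℝ, y ⬝ᵥ G *ᵥ y ≤ y ⬝ᵥ y := by
    intro y
    set z : Fin n → ℝ := M⁻¹ *ᵥ (Dᵀ *ᵥ y) with hz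
    have hGy : G *ᵥ y = D *ᵥ z := by
      show (D * M⁻¹ * Dᵀ) *ᵥ y = _
      rw [hz, mulVec_mulVec, mulVec_mulVec]
    have hMz : M *ᵥ z = Dᵀ *ᵥ y := by
      rw [hz, mulVec_mulVec, Matrix.mul_nonsing_inv _ (isUnit_iff_isUnit_det _ |>.mp hMpd.isUnit),
        one_mulVec]
    have t_eq : y ⬝ᵥ G *ᵥ y = z ⬝ᵥ M *ᵥ z := by
      rw [hGy, dotProduct_mulVec y D z, ← mulVec_transpose, hMz.symm,
        dotProduct_comm]
    have hDz : (D *ᵥ z) ⬝ᵥ (D *ᵥ z) ≤ z ⬝ᵥ M *ᵥ z := by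
      rw [key z]
      nlinarith [dp_self_nonneg (K *ᵥ z)]
    have cauchy : (y ⬝ᵥ (D *ᵥ z)) ^ 2 ≤ (y ⬝ᵥ y) * ((D *ᵥ z) ⬝ᵥ (D *ᵥ z)) := by
      have := Finset.sum_mul_sq_le_sq_mul_sq Finset.univ y (D *ᵥ z)
      simpa [dotProduct, pow_two] using this
    have ht0 : 0 ≤ y ⬝ᵥ G *ᵥ y := by
      have := hG.dotProduct_mulVec_nonneg y
      rwa [show star y = y from rfl] at this
    rcases ht0.lt_or_eq with ht | ht
    · have h2 : (y ⬝ᵥ G *ᵥ y) ^ 2 ≤ (y ⬝ᵥ y) * (y ⬝ᵥ G *ᵥ y) := by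
        calc (y ⬝ᵥ G *ᵥ y) ^ 2 = (y ⬝ᵥ (D *ᵥ z)) ^ 2 := by rw [hGy]
        _ ≤ (y ⬝ᵥ y) * ((D *ᵥ z) ⬝ᵥ (D *ᵥ z)) := cauchy
        _ ≤ (y ⬝ᵥ y) * (z ⬝ᵥ M *ᵥ z) := by
            exact mul_le_mul_of_nonneg_left hDz (dp_self_nonneg y)
        _ = (y ⬝ᵥ y) * (y ⬝ᵥ G *ᵥ y) := by rw [t_eq]
      nlinarith
    · rw [← ht]; exact dp_self_nonneg y
  have hspec : ∀ r ∈ spectrum ℝ G, 0 ≤ r ∧ r ≤ 1 := by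
    intro r hr
    rw [← AlgEquiv.spectrum_eq (Matrix.toLinAlgEquiv' (R := ℝ) (n := Fin m)),
      ← Module.End.hasEigenvalue_iff_mem_spectrum] at hr
    obtain ⟨v, hv⟩ := hr.exists_hasEigenvector
    have hv0 : v ≠ 0 := hv.right
    have hGv : G *ᵥ v = r • v := by
      have := hv.apply_eq_smul
      rwa [Matrix.toLinAlgEquiv'_apply] at this
    have hvv : 0 < v ⬝ᵥ v := by
      rcases (dp_self_nonneg v).lt_or_eq with h | h
      · exact h
      · exact absurd (dotProduct_self_eq_zero.mp h.symm) hv0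
    have hr1 : v ⬝ᵥ G *ᵥ v = r * (v ⬝ᵥ v) := by
      rw [hGv, dotProduct_smul, smul_eq_mul]
    have h0 : 0 ≤ v ⬝ᵥ G *ᵥ v := by
      have := hG.dotProduct_mulVec_nonneg v
      rwa [show star v = v from rfl] at this
    have h1 : v ⬝ᵥ G *ᵥ v ≤ v ⬝ᵥ v := hbound v
    constructor
    · nlinarith
    · nlinarith
  refine ⟨?_, hG, ?_⟩
  · exact hG.isHermitian
  · apply Real.sSup_le
    · rintro x ⟨r, hr, rfl⟩
      obtain ⟨h0, h1⟩ := hspec r hr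
      rwa [abs_of_nonneg h0]
    · norm_num
end

section
/- With M = DᵀD + (μ/β)KᵀK positive definite and G = D M⁻¹ Dᵀ, the affine map h(w) = D M⁻¹ (Dᵀ w + (μ/β) Kᵀ y) is nonexpansive in the Euclidean norm: ‖h(w) − h(w̃)‖₂ ≤ ‖w − w̃‖₂ for all w, w̃. -/
open Matrix

noncomputable def enormFin {n : ℕ} (x : Fin n → ℝ) : ℝ := Real.sqrt (∑ i, (x i) ^ 2)

lemma enorm_nonneg' {n : ℕ} (x : Fin n → ℝ) : 0 ≤ enormFin x := Real.sqrt_nonneg _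

lemma dot_self_nonneg {k : ℕ} (x : Fin k → ℝ) : 0 ≤ x ⬝ᵥ x :=
  Finset.sum_nonneg fun i _ => mul_self_nonneg _

lemma enorm_sq {k : ℕ} (x : Fin k → ℝ) : enormFin x ^ 2 = x ⬝ᵥ x := by
  rw [enormFin, Real.sq_sqrt (Finset.sum_nonneg fun i _ => sq_nonneg _)]
  simp [dotProduct, sq]

lemma dot_transpose {a b : ℕ} (A : Matrix (Fin a) (Fin b) ℝ) (x : Fin b → ℝ) (z : Fin a → ℝ) :
    x ⬝ᵥ Aᵀ.mulVec z = A.mulVec x ⬝ᵥ z := by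
  rw [dotProduct_mulVec, vecMul_transpose]

lemma dot_transpose' {a b : ℕ} (A : Matrix (Fin a) (Fin b) ℝ) (x : Fin a → ℝ) (z : Fin b → ℝ) :
    x ⬝ᵥ A.mulVec z = Aᵀ.mulVec x ⬝ᵥ z := by
  rw [dotProduct_mulVec, ← mulVec_transpose]

lemma dot_le_enorm_mul {k : ℕ} (x z : Fin k → ℝ) : x ⬝ᵥ z ≤ enormFin x * enormFin z := by
  have h := Finset.sum_mul_sq_le_sq_mul_sq Finset.univ x z
  have h2 : x ⬝ᵥ z ≤ |x ⬝ᵥ z| := le_abs_self _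
  refine h2.trans ?_
  have : |x ⬝ᵥ z| = Real.sqrt ((x ⬝ᵥ z) ^ 2) := by rw [Real.sqrt_sq_eq_abs]
  rw [this, enormFin, enormFin, ← Real.sqrt_mul (Finset.sum_nonneg fun i _ => sq_nonneg _)]
  exact Real.sqrt_le_sqrt (by simpa [dotProduct] using h)

theorem h_nonexpansive {m n p : ℕ}
    (D : Matrix (Fin m) (Fin n) ℝ) (K : Matrix (Fin p) (Fin n) ℝ)
    (μ β : ℝ) (hμ : 0 < μ) (hβ : 0 < β) (y : Fin p → ℝ)
    (hnull : ∀ x : Fin n → ℝ, K.mulVec x = 0 → D.mulVec x = 0 → x = 0) :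
    let M := Dᵀ * D + (μ / β) • (Kᵀ * K)
    let h : (Fin m → ℝ) → (Fin m → ℝ) :=
      fun w => (D * M⁻¹).mulVec (Dᵀ.mulVec w + (μ / β) • Kᵀ.mulVec y)
    ∀ w w' : Fin m → ℝ, enormFin (h w - h w') ≤ enormFin (w - w') := by
  intro M h w w'
  have hcpos : 0 < μ / β := div_pos hμ hβ
  -- quadratic form identity
  have hq : ∀ x : Fin n → ℝ, x ⬝ᵥ M.mulVec x
      = D.mulVec x ⬝ᵥ D.mulVec x + (μ / β) * (K.mulVec x ⬝ᵥ K.mulVec x) := by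
    intro x
    show x ⬝ᵥ (Dᵀ * D + (μ / β) • (Kᵀ * K)).mulVec x = _
    rw [add_mulVec, smul_mulVec, dotProduct_add, dotProduct_smul]
    rw [← mulVec_mulVec, ← mulVec_mulVec, dot_transpose, dot_transpose, smul_eq_mul]
  have hdet : M.det ≠ 0 := by
    intro h0
    obtain ⟨x, hx, hMx⟩ := Matrix.exists_mulVec_eq_zero_iff.mpr h0
    have hz := hq x
    rw [hMx, dotProduct_zero] at hz
    have h1 : 0 ≤ D.mulVec x ⬝ᵥ D.mulVec x := dot_self_nonneg _
    have h2 : 0 ≤ K.mulVec x ⬝ᵥ K.mulVec x := dot_self_nonneg _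
    have hD : D.mulVec x ⬝ᵥ D.mulVec x = 0 := by nlinarith
    have hK : K.mulVec x ⬝ᵥ K.mulVec x = 0 := by nlinarith
    exact hx (hnull x (dotProduct_self_eq_zero.mp hK) (dotProduct_self_eq_zero.mp hD))
  have hMinv : M * M⁻¹ = 1 := mul_nonsing_inv M (isUnit_iff_ne_zero.mpr hdet)
  set v : Fin m → ℝ := w - w' with hv
  set u : Fin n → ℝ := M⁻¹.mulVec (Dᵀ.mulVec v) with hu
  set g : Fin m → ℝ := D.mulVec u with hg
  have hdiff : h w - h w' = g := by
    show (D * M⁻¹).mulVec (Dᵀ.mulVec w + (μ / β) • Kᵀ.mulVec y)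
        - (D * M⁻¹).mulVec (Dᵀ.mulVec w' + (μ / β) • Kᵀ.mulVec y) = g
    rw [← mulVec_sub, add_sub_add_comm, sub_self, add_zero, ← mulVec_sub, hg, hu, hv,
      ← mulVec_mulVec]
  have hMu : M.mulVec u = Dᵀ.mulVec v := by
    rw [hu, mulVec_mulVec, hMinv, one_mulVec]
  have key : g ⬝ᵥ g ≤ v ⬝ᵥ g := by
    have h1 : v ⬝ᵥ g = u ⬝ᵥ M.mulVec u := by
      rw [hg, dot_transpose', ← hMu, dotProduct_comm]
    rw [h1, hq u, ← hg]
    nlinarith [dot_self_nonneg (K.mulVec u)]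
  have hcs : v ⬝ᵥ g ≤ enormFin v * enormFin g := dot_le_enorm_mul v g
  rw [hdiff]
  rcases eq_or_lt_of_le (enorm_nonneg' g) with h0 | h0
  · rw [← h0]; exact enorm_nonneg' v
  · have : enormFin g ^ 2 ≤ enormFin v * enormFin g := by rw [enorm_sq]; exact key.trans hcs
    nlinarith
end
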